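/- Suppose for each fixed θ the map y ↦ G_θ(y) := E_{Z ∼ D(θ)} G(y, Z) is α-strongly monotone on Θ, the distribution map D is ε-sensitive in Wasserstein-1 distance (W₁(D(θ), D(θ')) ≤ ε‖θ - θ'‖), and z ↦ G(y, z) is β-Lipschitz for every y. Define sol(θ) as the unique zero of G_θ in Θ. Then sol is (βε/α)-Lipschitz: ‖sol(θ) - sol(θ')‖ ≤ (βε/α)‖θ - θ'‖ for all θ, θ' ∈ Θ. -/

import Mathlib

open MeasureTheory

/-- If G_θ(y) = E_{Z∼D(θ)} G(y,Z) is α-strongly monotone in y, the distribution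
map D is ε-sensitive in Wasserstein-1 distance (expressed via the
Kantorovich–Rubinstein duality), and z ↦ G(y,z) is β-Lipschitz, then the
solution map θ ↦ sol(θ) (the unique zero of G_θ in Θ) is (βε/α)-Lipschitz. -/
theorem solution_map_lipschitz
    {d : ℕ} {Z : Type*} [MetricSpace Z] [MeasurableSpace Z] [BorelSpace Z]
    (Θ : Set (EuclideanSpace ℝ (Fin d))) (hΘ : Convex ℝ Θ)
    (D : EuclideanSpace ℝ (Fin d) → Measure Z)
    (hprob : ∀ θ, IsProbabilityMeasure (D θ))
    (G : EuclideanSpace ℝ (Fin d) → Z → EuclideanSpace ℝ (Fin d))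
    (hint : ∀ y θ, Integrable (G y) (D θ))
    (α β ε : ℝ) (hα : 0 < α) (hβ : 0 < β) (hε : 0 ≤ ε)
    -- α-strong monotonicity of y ↦ G_θ(y) on Θ, for every θ
    (hmono : ∀ θ, ∀ y₁ ∈ Θ, ∀ y₂ ∈ Θ,
      α * ‖y₁ - y₂‖ ^ 2 ≤
        (inner ℝ ((∫ z, G y₁ z ∂(D θ)) - ∫ z, G y₂ z ∂(D θ)) (y₁ - y₂) : ℝ))
    -- β-Lipschitzness of z ↦ G(y,z)
    (hLipz : ∀ y, ∀ z z' : Z, ‖G y z - G y z'‖ ≤ β * dist z z')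
    -- ε-sensitivity of D in W₁, via Kantorovich–Rubinstein duality
    (hsens : ∀ θ θ', ∀ f : Z → ℝ, LipschitzWith 1 f →
      (∫ z, f z ∂(D θ)) - (∫ z, f z ∂(D θ')) ≤ ε * ‖θ - θ'‖)
    -- sol(θ) is the unique zero of G_θ in Θ
    (sol : EuclideanSpace ℝ (Fin d) → EuclideanSpace ℝ (Fin d))
    (hsol : ∀ θ, sol θ ∈ Θ ∧ (∫ z, G (sol θ) z ∂(D θ)) = 0)
    (huniq : ∀ θ, ∀ y ∈ Θ, (∫ z, G y z ∂(D θ)) = 0 → y = sol θ) :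
    ∀ θ θ', ‖sol θ - sol θ'‖ ≤ (β * ε / α) * ‖θ - θ'‖ := by

  intro θ θ'
  by_cases hΔ0 : sol θ = sol θ'
  · rw [hΔ0, sub_self, norm_zero]
    positivity
  set y := sol θ
  set y' := sol θ'
  set Δ : EuclideanSpace ℝ (Fin d) := y - y' with hΔdef
  have hΔ : 0 < ‖Δ‖ := by
    simpa [hΔdef, sub_eq_zero] using hΔ0
  set c : ℝ := (β * ‖Δ‖)⁻¹ with hc
  have hcpos : 0 < c := by positivity
  set f : Z → ℝ := fun z => c * (inner ℝ Δ (G y' z) : ℝ) with hf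
  have hflip : LipschitzWith 1 f := by
    rw [lipschitzWith_iff_dist_le_mul]
    intro z z'
    have h1 : dist (f z) (f z') = |c * (inner ℝ Δ (G y' z - G y' z') : ℝ)| := by
      rw [Real.dist_eq]
      congr 1
      rw [hf]
      simp [inner_sub_right, mul_sub]
    rw [h1, abs_mul, abs_of_pos hcpos]
    have h2 : |(inner ℝ Δ (G y' z - G y' z') : ℝ)| ≤ ‖Δ‖ * ‖G y' z - G y' z'‖ :=
      abs_real_inner_le_norm _ _
    have h3 : ‖G y' z - G y' z'‖ ≤ β * dist z z' := hLipz y' z z'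
    calc c * |(inner ℝ Δ (G y' z - G y' z') : ℝ)|
        ≤ c * (‖Δ‖ * (β * dist z z')) := by
          apply mul_le_mul_of_nonneg_left _ hcpos.le
          exact h2.trans (mul_le_mul_of_nonneg_left h3 (norm_nonneg _))
      _ = (β * ‖Δ‖)⁻¹ * (β * ‖Δ‖) * dist z z' := by ring
      _ = 1 * dist z z' := by
          rw [inv_mul_cancel₀ (by positivity)]
  have hintgr : ∀ t, ∫ z, f z ∂(D t) = c * (inner ℝ Δ (∫ z, G y' z ∂(D t)) : ℝ) := by
    intro t
    rw [hf]
    rw [MeasureTheory.integral_const_mul]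
    congr 1
    exact integral_inner (hint y' t) Δ
  have hkey := hsens θ' θ f hflip
  rw [hintgr, hintgr, (hsol θ').2, inner_zero_right, mul_zero, zero_sub] at hkey
  -- hkey : -(c * ⟪Δ, ∫ G y' dDθ⟫) ≤ ε * ‖θ' - θ‖
  have hmono' := hmono θ y (hsol θ).1 y' (hsol θ').1
  rw [(hsol θ).2, zero_sub] at hmono'
  have hswap : (inner ℝ (-(∫ z, G y' z ∂(D θ))) (y - y') : ℝ)
      = -(inner ℝ Δ (∫ z, G y' z ∂(D θ)) : ℝ) := by
    rw [inner_neg_left, real_inner_comm]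
  rw [hswap] at hmono'
  have hnn : ‖θ' - θ‖ = ‖θ - θ'‖ := norm_sub_rev _ _
  rw [hnn] at hkey
  -- from hkey: -⟪Δ, I⟫ ≤ (β * ‖Δ‖) * (ε * ‖θ - θ'‖)
  have hkey2 : -(inner ℝ Δ (∫ z, G y' z ∂(D θ)) : ℝ) ≤ β * ‖Δ‖ * (ε * ‖θ - θ'‖) := by
    have := mul_le_mul_of_nonneg_left hkey (by positivity : (0:ℝ) ≤ β * ‖Δ‖)
    calc -(inner ℝ Δ (∫ z, G y' z ∂(D θ)) : ℝ)
        = β * ‖Δ‖ * (-(c * (inner ℝ Δ (∫ z, G y' z ∂(D θ)) : ℝ))) := by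
          rw [hc]; field_simp
      _ ≤ β * ‖Δ‖ * (ε * ‖θ - θ'‖) := this
  have hfinal : α * ‖Δ‖ ^ 2 ≤ β * ε * ‖θ - θ'‖ * ‖Δ‖ := by
    calc α * ‖Δ‖ ^ 2 ≤ _ := hmono'
      _ ≤ β * ‖Δ‖ * (ε * ‖θ - θ'‖) := hkey2
      _ = β * ε * ‖θ - θ'‖ * ‖Δ‖ := by ring
  have : ‖Δ‖ ≤ β * ε / α * ‖θ - θ'‖ := by
    rw [div_mul_eq_mul_div, le_div_iff₀ hα]
    nlinarith [hΔ]
  simpa [hΔdef] using this
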